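/- (Conditional expectation difference bound.) Let π_p and π_{p−1} be probability densities on E^j × E with E ⊂ ℝ compact, such that the marginals satisfy π_{q,0}(x_{1:j}) ≥ c > 0 for q ∈ {p−1, p}, and sup_{x_{1:j}} |π_p(x_{1:j}) − π_{p−1}(x_{1:j})| ≤ ε (for both the full and marginal densities). Then for every φ with Osc(φ) ≤ 1 and every x_{1:j}, |π_p(φ | x_{1:j}) − π_{p−1}(φ | x_{1:j})| ≤ K ε, where K depends only on c and the Lebesgue measure of E, and π_q(φ | x_{1:j}) = ∫ φ(x) π_q(x_{1:j}, x) dx / π_q(x_{1:j}). -/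

import Mathlib

open MeasureTheory Set

/-- The box `E^j` inside `Fin j → ℝ`. -/
def box (j : ℕ) (E : Set ℝ) : Set (Fin j → ℝ) := Set.univ.pi fun _ => E

/-- Conditional expectation of `φ` under the density `π` on `E^j × E`, given the first
block `x`. -/
noncomputable def condExpOf (E : Set ℝ) {j : ℕ} (π : (Fin j → ℝ) → ℝ → ℝ)
    (φ : ℝ → ℝ) (x : Fin j → ℝ) : ℝ :=
  (∫ t in E, φ t * π x t) / ∫ t in E, π x t

lemma key_frac (A B a b v ε c : ℝ) (hc : 0 < c) (ha : c ≤ a) (hb : c ≤ b)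
    (hAB : |A - B| ≤ v * ε) (hB : |B| ≤ b) (hab : |a - b| ≤ ε)
    (hε : 0 ≤ ε) :
    |A / a - B / b| ≤ (v / c + 1 / c) * ε := by
  have ha0 : 0 < a := hc.trans_le ha
  have hb0 : 0 < b := hc.trans_le hb
  have h1 : A / a - B / b = (A - B) / a + B * (b - a) / (a * b) := by
    field_simp; ring
  rw [h1]
  have h2 : |(A - B) / a| ≤ v * ε / c := by
    rw [abs_div, abs_of_pos ha0]
    gcongr
    exact (abs_nonneg _).trans hAB
  have h3 : |B * (b - a) / (a * b)| ≤ ε / c := by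
    rw [abs_div, abs_mul, abs_of_pos (mul_pos ha0 hb0)]
    have hnum : |B| * |b - a| ≤ b * ε := by
      have : |b - a| ≤ ε := by rw [abs_sub_comm]; exact hab
      exact mul_le_mul hB this (abs_nonneg _) hb0.le
    calc |B| * |b - a| / (a * b) ≤ b * ε / (a * b) := by gcongr
      _ = ε / a := by rw [div_eq_div_iff (by positivity) (by positivity)]; ring
      _ ≤ ε / c := by gcongr
  calc |(A - B) / a + B * (b - a) / (a * b)|
      ≤ |(A - B) / a| + |B * (b - a) / (a * b)| := abs_add_le _ _
    _ ≤ v * ε / c + ε / c := add_le_add h2 h3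
    _ = (v / c + 1 / c) * ε := by ring

/-- Conditional expectation difference bound: if the marginals of two densities on
`E^j × E` are bounded below by `c > 0` and the densities (joint and marginal) differ
uniformly by at most `ε`, then conditional expectations of any `φ` with `Osc(φ) ≤ 1`
differ by at most `K ε`, with `K` depending only on `c` and the Lebesgue measure of `E`. -/
theorem stmt18 (E : Set ℝ) (hEc : IsCompact E) (hEm : MeasurableSet E)
    (hE : 0 < (volume E).toReal) (c : ℝ) (hc : 0 < c) (j : ℕ) :
    ∃ K : ℝ, 0 < K ∧
      ∀ (πp πq : (Fin j → ℝ) → ℝ → ℝ),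
        Measurable (Function.uncurry πp) → Measurable (Function.uncurry πq) →
        (∀ x ∈ box j E, ∀ t ∈ E, 0 ≤ πp x t ∧ 0 ≤ πq x t) →
      ∀ ε : ℝ, 0 ≤ ε →
        (∀ x ∈ box j E, c ≤ (∫ t in E, πp x t) ∧ c ≤ ∫ t in E, πq x t) →
        (∀ x ∈ box j E, ∀ t ∈ E, |πp x t - πq x t| ≤ ε) →
        (∀ x ∈ box j E, |(∫ t in E, πp x t) - ∫ t in E, πq x t| ≤ ε) →
      ∀ (φ : ℝ → ℝ), Measurable φ → (∀ s t, |φ s - φ t| ≤ 1) →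
      ∀ x ∈ box j E,
        |condExpOf E πp φ x - condExpOf E πq φ x| ≤ K * ε := by
  set v : ℝ := (volume E).toReal with hv
  refine ⟨v / c + 1 / c, by positivity, ?_⟩
  intro πp πq hmp hmq hpos ε hε hlow hdiff hmargdiff φ hφm hφosc x hx
  -- E is nonempty
  have hEvol : volume E ≠ 0 := by
    intro h0
    rw [hv, h0] at hE; simp at hE
  have hEne : E.Nonempty := nonempty_of_measure_ne_zero hEvol
  obtain ⟨t0, _⟩ := hEne
  set ψ : ℝ → ℝ := fun t => φ t - φ t0 with hψdef
  have hψbd : ∀ t, ‖ψ t‖ ≤ 1 := fun t => hφosc t t0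
  have hψm : Measurable ψ := hφm.sub measurable_const
  have hEfin : volume E < ⊤ := hEc.measure_lt_top
  -- measurability in t
  have hmpx : Measurable (πp x) := hmp.comp measurable_prodMk_left
  have hmqx : Measurable (πq x) := hmq.comp measurable_prodMk_left
  -- integrability of the marginals
  have hintp : IntegrableOn (πp x) E := by
    by_contra h
    have h0 := integral_undef (by exact h : ¬ Integrable (πp x) (volume.restrict E))
    have := (hlow x hx).1
    rw [h0] at this; linarith
  have hintq : IntegrableOn (πq x) E := by
    by_contra h
    have h0 := integral_undef (by exact h : ¬ Integrable (πq x) (volume.restrict E))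
    have := (hlow x hx).2
    rw [h0] at this; linarith
  have hintψp : IntegrableOn (fun t => ψ t * πp x t) E :=
    hintp.bdd_mul (hψm.aestronglyMeasurable) (Filter.Eventually.of_forall hψbd)
  have hintψq : IntegrableOn (fun t => ψ t * πq x t) E :=
    hintq.bdd_mul (hψm.aestronglyMeasurable) (Filter.Eventually.of_forall hψbd)
  set A : ℝ := ∫ t in E, ψ t * πp x t with hA
  set B : ℝ := ∫ t in E, ψ t * πq x t with hB
  set a : ℝ := ∫ t in E, πp x t with ha
  set b : ℝ := ∫ t in E, πq x t with hb
  have hca : c ≤ a := (hlow x hx).1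
  have hcb : c ≤ b := (hlow x hx).2
  have ha0 : a ≠ 0 := (hc.trans_le hca).ne'
  have hb0 : b ≠ 0 := (hc.trans_le hcb).ne'
  -- |A - B| ≤ v * ε
  have hABdiff : |A - B| ≤ v * ε := by
    have hsub : A - B = ∫ t in E, (ψ t * πp x t - ψ t * πq x t) :=
      (integral_sub hintψp hintψq).symm
    rw [hsub]
    have hbound : ∀ t ∈ E, ‖ψ t * πp x t - ψ t * πq x t‖ ≤ ε := by
      intro t ht
      have : ψ t * πp x t - ψ t * πq x t = ψ t * (πp x t - πq x t) := by ring
      rw [this]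
      rw [norm_mul]
      calc ‖ψ t‖ * ‖πp x t - πq x t‖ ≤ 1 * ε :=
            mul_le_mul (hψbd t) (hdiff x hx t ht) (norm_nonneg _) zero_le_one
        _ = ε := one_mul ε
    have := norm_setIntegral_le_of_norm_le_const hEfin hbound
    calc |∫ t in E, (ψ t * πp x t - ψ t * πq x t)| ≤ ε * v := this
      _ = v * ε := mul_comm _ _
  -- |B| ≤ b
  have hBb : |B| ≤ b := by
    rw [hB, hb, ← Real.norm_eq_abs]
    calc ‖∫ t in E, ψ t * πq x t‖ ≤ ∫ t in E, ‖ψ t * πq x t‖ := norm_integral_le_integral_norm _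
      _ ≤ ∫ t in E, πq x t := by
          refine setIntegral_mono_on hintψq.norm hintq hEm ?_
          intro t ht
          rw [norm_mul]
          have h1 : ‖πq x t‖ = πq x t := abs_of_nonneg (hpos x hx t ht).2
          calc ‖ψ t‖ * ‖πq x t‖ ≤ 1 * ‖πq x t‖ :=
                mul_le_mul_of_nonneg_right (hψbd t) (norm_nonneg _)
            _ = πq x t := by rw [one_mul, h1]
  have hab : |a - b| ≤ ε := hmargdiff x hx
  -- rewrite conditional expectations via ψ
  have hcondp : condExpOf E πp φ x = A / a + φ t0 := by
    have hptw : ∀ t, φ t * πp x t = ψ t * πp x t + φ t0 * πp x t := by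
      intro t; simp [hψdef]; ring
    unfold condExpOf
    rw [show (fun t => φ t * πp x t) = fun t => ψ t * πp x t + φ t0 * πp x t from
      funext hptw]
    rw [integral_add hintψp (hintp.const_mul (φ t0)), integral_const_mul, ← hA, ← ha]
    field_simp
  have hcondq : condExpOf E πq φ x = B / b + φ t0 := by
    have hptw : ∀ t, φ t * πq x t = ψ t * πq x t + φ t0 * πq x t := by
      intro t; simp [hψdef]; ring
    unfold condExpOf
    rw [show (fun t => φ t * πq x t) = fun t => ψ t * πq x t + φ t0 * πq x t from
      funext hptw]
    rw [integral_add hintψq (hintq.const_mul (φ t0)), integral_const_mul, ← hB, ← hb]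
    field_simp
  rw [hcondp, hcondq]
  have : A / a + φ t0 - (B / b + φ t0) = A / a - B / b := by ring
  rw [this]
  exact key_frac A B a b v ε c hc hca hcb hABdiff hBb hab hε
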